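/- Any functor from the category of countable groups to the category of finitely generated groups is isomorphic to a constant functor. -/

import Mathlib

open CategoryTheory

universe u

open scoped Classical in
noncomputable def myE (A : Set ℕ) (n : ℕ) : ℕ := if n ∈ A then 2*n else 2*n+1

lemma myE_ne {A B : Set ℕ} {n : ℕ} (h : (n ∈ A) ≠ (n ∈ B)) : myE A n ≠ myE B n := by
  unfold myE
  by_cases hA : n ∈ A <;> by_cases hB : n ∈ B <;> simp_all

lemma coprodI_countable {ι : Type*} [Countable ι] (M : ι → Type*) [∀ i, Monoid (M i)]
    [∀ i, Countable (M i)] : Countable (Monoid.CoprodI M) := by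
  haveI : Countable (FreeMonoid (Σ i, M i)) := inferInstanceAs (Countable (List _))
  delta Monoid.CoprodI
  exact Con.mk'_surjective.countable

lemma fg_countable (G : Type*) [Group G] (h : Group.FG G) : Countable G := by
  obtain ⟨S, hS⟩ := h.1
  classical
  haveI : Countable (FreeGroup {x // x ∈ (S : Set G)}) :=
    FreeGroup.toWord_injective.countable
  have hsurj : Function.Surjective
      (FreeGroup.lift (fun x => x.1 : {x // x ∈ (S : Set G)} → G)) := by
    rw [← MonoidHom.range_eq_top, FreeGroup.range_lift_eq_closure, Subtype.range_coe]
    exact hS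
  exact hsurj.countable

lemma hom_countable {G H : Type*} [Group G] [Group H] (h : Group.FG G) [Countable H] :
    Countable (G →* H) := by
  obtain ⟨S, hS⟩ := h.1
  have hinj : Function.Injective
      (fun f : G →* H => fun s : {x // x ∈ (S : Set G)} => f s.1) := by
    intro f g hfg
    exact MonoidHom.eq_of_eqOn_dense hS (fun x hx => congrFun hfg ⟨x, hx⟩)
  exact hinj.countable

section homs

variable (G : Type u) [Group G]

def myι (n : ℕ) : G →* Monoid.CoprodI (fun _ : ℕ => G) :=
  Monoid.CoprodI.of (M := fun _ : ℕ => G) (i := n)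

noncomputable def myσ (A : Set ℕ) :
    Monoid.CoprodI (fun _ : ℕ => G) →* Monoid.CoprodI (fun _ : ℕ => G) :=
  Monoid.CoprodI.lift (fun n => myι G (myE A n))

lemma myσ_ι (A : Set ℕ) (n : ℕ) : (myσ G A).comp (myι G n) = myι G (myE A n) :=
  MonoidHom.ext fun x => by
    rw [MonoidHom.comp_apply]
    exact Monoid.CoprodI.lift_of (M := fun _ : ℕ => G) (fun k => myι G (myE A k)) (i := n) x

variable {G} {H : Type u} [Group H]

noncomputable def myh (f g : G →* H) (t : ℕ) :
    Monoid.CoprodI (fun _ : ℕ => G) →* H :=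
  Monoid.CoprodI.lift (fun k => if k = t then f else g)

lemma myh_eq (f g : G →* H) (t : ℕ) : (myh f g t).comp (myι G t) = f :=
  MonoidHom.ext fun x => by
    rw [MonoidHom.comp_apply]
    rw [show myh f g t ((myι G t) x) =
      Monoid.CoprodI.lift (fun k => if k = t then f else g) (Monoid.CoprodI.of (M := fun _ : ℕ => G) (i := t) x)
      from rfl, Monoid.CoprodI.lift_of, if_pos rfl]

lemma myh_ne (f g : G →* H) {t s : ℕ} (hst : s ≠ t) : (myh f g t).comp (myι G s) = g :=
  MonoidHom.ext fun x => by
    rw [MonoidHom.comp_apply]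
    rw [show myh f g t ((myι G s) x) =
      Monoid.CoprodI.lift (fun k => if k = t then f else g) (Monoid.CoprodI.of (M := fun _ : ℕ => G) (i := s) x)
      from rfl, Monoid.CoprodI.lift_of, if_neg hst]

end homs

abbrev CGrp := ObjectProperty.FullSubcategory (fun G : GrpCat.{u} => Countable G)
abbrev FGGrp := ObjectProperty.FullSubcategory (fun G : GrpCat.{u} => Group.FG G)

lemma key (F : CGrp.{u} ⥤ FGGrp.{u}) {X Y : CGrp.{u}} (f g : X ⟶ Y) :
    F.map f = F.map g := by
  haveI : Countable X.obj := X.property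
  haveI hM : Countable (Monoid.CoprodI (fun _ : ℕ => X.obj)) := coprodI_countable _
  let T : CGrp.{u} := ⟨GrpCat.of (Monoid.CoprodI (fun _ : ℕ => X.obj)), hM⟩
  let ι : ℕ → (X ⟶ T) := fun n => ObjectProperty.homMk (GrpCat.ofHom (myι X.obj n))
  let σ : Set ℕ → (T ⟶ T) := fun A => ObjectProperty.homMk (GrpCat.ofHom (myσ X.obj A))
  have hcomp : ∀ (A : Set ℕ) (n : ℕ), ι n ≫ σ A = ι (myE A n) := by
    intro A n
    apply ObjectProperty.hom_ext
    apply GrpCat.hom_ext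
    exact myσ_ι X.obj A n
  haveI : Countable ((F.obj T).obj) := fg_countable _ (F.obj T).property
  haveI : Countable (F.obj T ⟶ F.obj T) :=
    haveI := hom_countable (G := (F.obj T).obj) (H := (F.obj T).obj) (F.obj T).property
    Function.Injective.countable (f := fun φ : F.obj T ⟶ F.obj T => φ.hom.hom)
      (fun a b hab => ObjectProperty.hom_ext (h := GrpCat.hom_ext hab))
  have hnotinj : ¬ Function.Injective (fun A : Set ℕ => F.map (σ A)) := by
    intro hinj
    haveI := hinj.countable
    obtain ⟨e, he⟩ := exists_injective_nat (Set ℕ)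
    exact Function.cantor_injective e he
  rw [Function.not_injective_iff] at hnotinj
  obtain ⟨A, B, hFAB, hAB⟩ := hnotinj
  obtain ⟨n, hn⟩ : ∃ n, (n ∈ A) ≠ (n ∈ B) := by
    by_contra h
    push_neg at h
    exact hAB (Set.ext fun n => by rw [h n])
  have hne := myE_ne hn
  let h : T ⟶ Y := ObjectProperty.homMk (GrpCat.ofHom (myh f.hom.hom g.hom.hom (myE A n)))
  have hf : ι (myE A n) ≫ h = f := by
    apply ObjectProperty.hom_ext
    apply GrpCat.hom_ext
    exact myh_eq _ _ _
  have hg : ι (myE B n) ≫ h = g := by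
    apply ObjectProperty.hom_ext
    apply GrpCat.hom_ext
    exact myh_ne _ _ hne.symm
  have hιeq : F.map (ι (myE A n)) = F.map (ι (myE B n)) := by
    rw [← hcomp A n, ← hcomp B n, F.map_comp, F.map_comp, hFAB]
  calc F.map f = F.map (ι (myE A n) ≫ h) := by rw [hf]
    _ = F.map (ι (myE A n)) ≫ F.map h := F.map_comp _ _
    _ = F.map (ι (myE B n)) ≫ F.map h := by rw [hιeq]
    _ = F.map (ι (myE B n) ≫ h) := (F.map_comp _ _).symm
    _ = F.map g := by rw [hg]

theorem stmt_6
    (F : ObjectProperty.FullSubcategory (fun G : GrpCat.{u} => Countable G) ⥤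
         ObjectProperty.FullSubcategory (fun G : GrpCat.{u} => Group.FG G)) :
    ∃ d, Nonempty (F ≅ (Functor.const (ObjectProperty.FullSubcategory (fun G : GrpCat.{u} => Countable G))).obj d) := by
  let one : CGrp.{u} := ⟨GrpCat.of PUnit.{u+1}, inferInstance⟩
  let toOne : ∀ X : CGrp.{u}, X ⟶ one := fun X => ObjectProperty.homMk (GrpCat.ofHom (1 : X.obj →* PUnit.{u+1}))
  let fromOne : ∀ X : CGrp.{u}, one ⟶ X := fun X => ObjectProperty.homMk (GrpCat.ofHom (1 : PUnit.{u+1} →* X.obj))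
  refine ⟨F.obj one, ⟨NatIso.ofComponents (fun X =>
    { hom := F.map (toOne X)
      inv := F.map (fromOne X)
      hom_inv_id := by
        rw [← F.map_comp, key F (toOne X ≫ fromOne X) (𝟙 X), F.map_id]
      inv_hom_id := by
        rw [← F.map_comp, key F (fromOne X ≫ toOne X) (𝟙 one), F.map_id]
        rfl })
    (fun {X Y} f => by
      simp only [Functor.const_obj_map, Category.comp_id]
      rw [← F.map_comp]
      exact key F _ _)⟩⟩
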